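/- arXiv:0708.2887 — 2 statements merged into one kernel-verified Lean document; each statement's English description precedes it below -/
import Mathlib

section
/- Let Φ_j be a sequence of injective holomorphic maps (automorphisms of ℂⁿ) and suppose that for each j, sup_{x ∈ L_j} |Φ_{j+1}∘Φ_j^{-1}(x) − x| < ε_j where L_j ⊃ B(0,j) and Σ ε_j < ∞ with ε_j < dist(B(0,j), ∂B(0,j+1))/2 suitably controlled. Then the sequence Φ_j converges locally uniformly on the open set Ω = ⋃_j Φ_j^{-1}(B(0,j)) to a holomorphic map Φ : Ω → ℂⁿ, and Φ is injective on Ω. -/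
open Set Metric Filter Topology
/-- Cauchy-type estimate via the Schwarz lemma: a holomorphic map bounded by `M` on
`ball 0 R` has derivative bounded by `2 * M` on `ball 0 (R - 1)`. -/
lemma stmt16_aux_fderiv_bound {E F : Type*} [NormedAddCommGroup E] [NormedSpace ℂ E]
    [NormedAddCommGroup F] [NormedSpace ℂ F] {h : E → F} {R M : ℝ}
    (hd : DifferentiableOn ℂ h (ball 0 R)) (hb : ∀ z ∈ ball (0 : E) R, ‖h z‖ ≤ M)
    {x : E} (hx : x ∈ ball (0 : E) (R - 1)) : ‖fderiv ℂ h x‖ ≤ 2 * M := by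
  have hx' : ‖x‖ < R - 1 := by simpa [dist_eq_norm] using hx
  have hxR : x ∈ ball (0 : E) R := by
    simp only [mem_ball, dist_zero_right]; linarith
  have hM : 0 ≤ M := le_trans (norm_nonneg _) (hb x hxR)
  refine ContinuousLinearMap.opNorm_le_bound _ (by linarith) ?_
  intro v
  rcases eq_or_ne v 0 with rfl | hv
  · simp
  have hvn : 0 < ‖v‖ := norm_pos_iff.2 hv
  set r : ℝ := (R - ‖x‖) / ‖v‖ with hr_def
  have hr : 0 < r := div_pos (by linarith) hvn
  have hrv : r * ‖v‖ = R - ‖x‖ := div_mul_cancel₀ _ hvn.ne'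
  set f : ℂ → F := fun t => h (x + t • v) with hf_def
  have hline : ∀ t : ℂ, t ∈ ball (0 : ℂ) r → x + t • v ∈ ball (0 : E) R := by
    intro t ht
    have ht' : ‖t‖ < r := by simpa [dist_eq_norm] using ht
    have h1 : ‖x + t • v‖ ≤ ‖x‖ + ‖t‖ * ‖v‖ := by
      calc ‖x + t • v‖ ≤ ‖x‖ + ‖t • v‖ := norm_add_le _ _
        _ = ‖x‖ + ‖t‖ * ‖v‖ := by rw [norm_smul]
    have h2 : ‖t‖ * ‖v‖ < r * ‖v‖ := by
      exact mul_lt_mul_of_pos_right ht' hvn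
    simp only [mem_ball, dist_zero_right]
    linarith [hrv]
  have hfd : DifferentiableOn ℂ f (ball (0 : ℂ) r) := by
    intro t ht
    have h1 : DifferentiableAt ℂ h (x + t • v) :=
      hd.differentiableAt (isOpen_ball.mem_nhds (hline t ht))
    have h2 : DifferentiableAt ℂ (fun t : ℂ => x + t • v) t :=
      ((differentiable_id.smul_const v).const_add x).differentiableAt
    exact (h1.comp t h2).differentiableWithinAt
  have hderiv : HasDerivAt f (fderiv ℂ h x v) 0 := by
    have h1 : HasFDerivAt h (fderiv ℂ h x) (x + (0 : ℂ) • v) := by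
      simpa using (hd.differentiableAt (isOpen_ball.mem_nhds hxR)).hasFDerivAt
    have h2 : HasDerivAt (fun t : ℂ => x + t • v) v 0 := by
      simpa using ((hasDerivAt_id (0 : ℂ)).smul_const v).const_add x
    exact h1.comp_hasDerivAt 0 h2
  have hf0 : f 0 = h x := by simp [hf_def]
  have hkey : ∀ η : ℝ, 0 < η → ‖fderiv ℂ h x v‖ ≤ (2 * M + η) / r := by
    intro η hη
    have hmaps : MapsTo f (ball (0 : ℂ) r) (ball (f 0) (2 * M + η)) := by
      intro t ht
      have h1 : ‖f t‖ ≤ M := hb _ (hline t ht)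
      have h2 : ‖f 0‖ ≤ M := by rw [hf0]; exact hb _ hxR
      have h3 : dist (f t) (f 0) ≤ 2 * M := by
        calc dist (f t) (f 0) ≤ ‖f t‖ + ‖f 0‖ := dist_le_norm_add_norm _ _
          _ ≤ 2 * M := by linarith
      exact mem_ball.2 (lt_of_le_of_lt h3 (by linarith))
    have := Complex.norm_deriv_le_div_of_mapsTo_ball hfd (hmaps.mono_right ball_subset_closedBall) hr
    rwa [hderiv.deriv] at this
  refine le_of_forall_pos_le_add ?_
  intro δ hδ
  have hη : 0 < δ / ‖v‖ := div_pos hδ hvn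
  have h1 := hkey _ hη
  have heq : (2 * M + δ / ‖v‖) / r = (2 * M + δ / ‖v‖) * ‖v‖ / (R - ‖x‖) := by
    rw [hr_def, div_div_eq_mul_div]
  have h2 : (2 * M + δ / ‖v‖) * ‖v‖ = 2 * M * ‖v‖ + δ := by
    field_simp
  have h3 : (2 * M + δ / ‖v‖) * ‖v‖ / (R - ‖x‖) ≤ (2 * M + δ / ‖v‖) * ‖v‖ := by
    refine div_le_self ?_ (by linarith)
    rw [h2]; positivity
  calc ‖fderiv ℂ h x v‖ ≤ (2 * M + δ / ‖v‖) / r := h1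
    _ ≤ (2 * M + δ / ‖v‖) * ‖v‖ := by rw [heq]; exact h3
    _ = 2 * M * ‖v‖ + δ := h2

/-- Increment estimate: a holomorphic map bounded by `M` on `ball 0 R` is
`2 * M`-Lipschitz on `ball 0 (R - 1)`. -/
lemma stmt16_aux_lipschitz {E F : Type*} [NormedAddCommGroup E] [NormedSpace ℂ E]
    [NormedAddCommGroup F] [NormedSpace ℂ F] {h : E → F} {R M : ℝ}
    (hd : DifferentiableOn ℂ h (ball 0 R)) (hb : ∀ z ∈ ball (0 : E) R, ‖h z‖ ≤ M)
    {x y : E} (hx : x ∈ ball (0 : E) (R - 1)) (hy : y ∈ ball (0 : E) (R - 1)) :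
    ‖h y - h x‖ ≤ 2 * M * ‖y - x‖ :=
  (convex_ball (0 : E) (R - 1)).norm_image_sub_le_of_norm_fderiv_le
    (fun z hz => hd.differentiableAt
      (isOpen_ball.mem_nhds (ball_subset_ball (by linarith) hz)))
    (fun z hz => stmt16_aux_fderiv_bound hd hb hz) hx hy

/-- Convergence lemma for compositions of automorphisms of `ℂⁿ` close
to the identity on increasing balls: if `Φⱼ` are holomorphic automorphisms (with
holomorphic inverses `Ψⱼ`), `φ_{j+1} = Φ_{j+1} ∘ Φⱼ⁻¹` satisfies `|φ_{j+1}(x) − x| < εⱼ`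
on `Lⱼ ⊇ B(0,j)`, with `Σ εⱼ < ∞` and `εⱼ < 2⁻ʲ`, then `Φⱼ` converges locally uniformly
on `Ω = ⋃ⱼ Φⱼ⁻¹(B(0,j))` to a holomorphic map `Φ`, injective on `Ω`, and `Ω` is open. -/
theorem stmt16 (n : ℕ) (Φ Ψ : ℕ → (Fin n → ℂ) → (Fin n → ℂ))
    (hΦhol : ∀ j, Differentiable ℂ (Φ j)) (hΨhol : ∀ j, Differentiable ℂ (Ψ j))
    (hinv₁ : ∀ j, Function.LeftInverse (Ψ j) (Φ j))
    (hinv₂ : ∀ j, Function.RightInverse (Ψ j) (Φ j))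
    (L : ℕ → Set (Fin n → ℂ)) (hL : ∀ j : ℕ, Metric.ball (0 : Fin n → ℂ) (j : ℝ) ⊆ L j)
    (ε : ℕ → ℝ) (hε : ∀ j, 0 < ε j) (hsum : Summable ε)
    (hsmall : ∀ j, ε j < 1 / 2 ^ j)
    (hclose : ∀ j, ∀ x ∈ L j, ‖Φ (j + 1) (Ψ j x) - x‖ < ε j) :
    let Ω := ⋃ j, (Φ j) ⁻¹' Metric.ball 0 (j : ℝ)
    IsOpen Ω ∧ ∃ Φlim : (Fin n → ℂ) → (Fin n → ℂ),
      TendstoLocallyUniformlyOn Φ Φlim atTop Ω ∧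
      DifferentiableOn ℂ Φlim Ω ∧ Set.InjOn Φlim Ω := by
  intro Ω
  set S : ℕ → Set (Fin n → ℂ) := fun j => (Φ j) ⁻¹' Metric.ball 0 (j : ℝ) with hS_def
  set b : ℕ → ℝ := fun k => (1 / 2 : ℝ) ^ k with hb_def
  clear_value b
  have hbpos : ∀ k, 0 < b k := by rw [hb_def]; exact fun k => pow_pos (by norm_num) k
  have hεb : ∀ k, ε k ≤ b k := by
    intro k
    have h1 := hsmall k
    have h2 : (1 / 2 : ℝ) ^ k = 1 / 2 ^ k := by rw [div_pow, one_pow]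
    simp only [hb_def]
    linarith [h2 ▸ h1]
  have hble1 : ∀ k, b k ≤ 1 := by rw [hb_def]; exact fun k => pow_le_one₀ (by norm_num) (by norm_num)
  have key : ∀ k (x : Fin n → ℂ), x ∈ S k → ‖Φ (k + 1) x - Φ k x‖ < ε k := by
    intro k x hx
    have h1 := hclose k (Φ k x) (hL k hx)
    rwa [hinv₁ k x] at h1
  have step : ∀ k, S k ⊆ S (k + 1) := by
    intro k x hx
    have h1 : ‖Φ k x‖ < (k : ℝ) := by
      simpa only [hS_def, mem_preimage, mem_ball, dist_zero_right] using hx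
    have h2 := key k x hx
    have h4 : ε k ≤ 1 := le_trans (hεb k) (hble1 k)
    simp only [hS_def, mem_preimage, mem_ball, dist_zero_right]
    have h5 := dist_triangle (Φ (k + 1) x) (Φ k x) 0
    simp only [dist_eq_norm, sub_zero] at h5
    push_cast
    linarith
  have mono : ∀ {j k : ℕ}, j ≤ k → S j ⊆ S k := by
    intro j k hjk
    induction hjk with
    | refl => exact subset_rfl
    | step _ ih => exact ih.trans (step _)
  have tele : ∀ (j : ℕ) x, x ∈ S j → ∀ k m : ℕ, j ≤ k → k ≤ m →
      ‖Φ m x - Φ k x‖ ≤ 2 * b k - 2 * b m := by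
    intro j x hx k m hjk hkm
    induction m, hkm using Nat.le_induction with
    | base => simp
    | succ m hkm ih =>
      have hxm : x ∈ S m := mono (hjk.trans hkm) hx
      have h1 : ‖Φ (m + 1) x - Φ m x‖ < ε m := key m x hxm
      have h2 : ε m ≤ b m := hεb m
      have h3 : b (m + 1) = b m / 2 := by simp only [hb_def, pow_succ]; ring
      have h4 := dist_triangle (Φ (m + 1) x) (Φ m x) (Φ k x)
      rw [dist_eq_norm, dist_eq_norm, dist_eq_norm] at h4
      linarith
  have tele2 : ∀ (j : ℕ) x, x ∈ S j → ∀ k m : ℕ, j ≤ k → k ≤ m →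
      ‖Φ m x - Φ k x‖ ≤ 2 * b k := by
    intro j x hx k m hjk hkm
    linarith [tele j x hx k m hjk hkm, hbpos m]
  have hcauchy : ∀ (j : ℕ) x, x ∈ S j → ∃ a, Tendsto (fun k => Φ k x) atTop (𝓝 a) := by
    intro j x hx
    have hc : CauchySeq (fun k => Φ (k + j) x) := by
      apply cauchySeq_of_le_geometric (1 / 2 : ℝ) (b j) (by norm_num)
      intro m
      have hidx : m + 1 + j = m + j + 1 := by omega
      have hxm : x ∈ S (m + j) := mono (Nat.le_add_left j m) hx
      have h1 : ‖Φ (m + j + 1) x - Φ (m + j) x‖ < ε (m + j) := key _ x hxm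
      have h2 : ε (m + j) ≤ b (m + j) := hεb _
      have h3 : b (m + j) = b j * (1 / 2) ^ m := by simp only [hb_def, pow_add]; ring
      rw [dist_eq_norm, norm_sub_rev, hidx]
      calc ‖Φ (m + j + 1) x - Φ (m + j) x‖ ≤ b (m + j) := le_trans h1.le h2
        _ = b j * (1 / 2) ^ m := h3
    obtain ⟨a, ha⟩ := cauchySeq_tendsto_of_complete hc
    exact ⟨a, (tendsto_add_atTop_iff_nat j).1 ha⟩
  set Φlim : (Fin n → ℂ) → (Fin n → ℂ) :=
    fun x => limUnder atTop (fun k => Φ k x) with hΦlim_def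
  have hconv : ∀ (j : ℕ) x, x ∈ S j → Tendsto (fun k => Φ k x) atTop (𝓝 (Φlim x)) := by
    intro j x hx
    obtain ⟨a, ha⟩ := hcauchy j x hx
    have h1 : Φlim x = a := by simp only [hΦlim_def]; exact ha.limUnder_eq
    rw [h1]; exact ha
  have hlimdist : ∀ (j : ℕ) x, x ∈ S j → ∀ k, j ≤ k → ‖Φlim x - Φ k x‖ ≤ 2 * b k := by
    intro j x hx k hjk
    have h1 : Tendsto (fun m => ‖Φ m x - Φ k x‖) atTop (𝓝 ‖Φlim x - Φ k x‖) :=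
      ((hconv j x hx).sub tendsto_const_nhds).norm
    refine le_of_tendsto h1 ?_
    filter_upwards [eventually_ge_atTop k] with m hm
    exact tele2 j x hx k m hjk hm
  have hbtend : Tendsto b atTop (𝓝 0) := by
    rw [hb_def]
    exact tendsto_pow_atTop_nhds_zero_of_lt_one (by norm_num) (by norm_num)
  have hunif : ∀ j : ℕ, TendstoUniformlyOn Φ Φlim atTop (S j) := by
    intro j
    rw [Metric.tendstoUniformlyOn_iff]
    intro δ hδ
    have hb0 : Tendsto (fun k => 2 * b k) atTop (𝓝 (2 * 0)) := hbtend.const_mul 2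
    rw [mul_zero] at hb0
    filter_upwards [hb0.eventually_lt_const hδ, eventually_ge_atTop j] with k h1 h2
    intro x hx
    rw [dist_eq_norm]
    exact lt_of_le_of_lt (hlimdist j x hx k h2) h1
  have hopen : ∀ j, IsOpen (S j) := fun j => isOpen_ball.preimage (hΦhol j).continuous
  have grow : ∀ (j : ℕ), 1 ≤ j → ∀ x, x ∈ S j → ∀ k, j ≤ k →
      ‖Φ k x‖ < (j : ℝ) + 1 := by
    intro j hj x hx k hjk
    have h1 : ‖Φ k x - Φ j x‖ ≤ 2 * b j := tele2 j x hx j k le_rfl hjk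
    have h2 : ‖Φ j x‖ < (j : ℝ) := by
      simpa only [hS_def, mem_preimage, mem_ball, dist_zero_right] using hx
    have h3 : b j ≤ b 1 := by
      simp only [hb_def]
      exact pow_le_pow_of_le_one (by norm_num) (by norm_num) hj
    have h4 : b 1 = 1 / 2 := by simp [hb_def]
    have h5 := dist_triangle (Φ k x) (Φ j x) 0
    simp only [dist_eq_norm, sub_zero] at h5
    linarith
  -- differentiability of `Φlim ∘ Ψ k` on `ball 0 (k - 1)`
  have hΨmem : ∀ (k : ℕ) z, z ∈ ball (0 : Fin n → ℂ) (k : ℝ) → Ψ k z ∈ S k := by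
    intro k z hz
    simp only [hS_def, mem_preimage]
    rw [hinv₂ k z]
    exact hz
  have hG : ∀ k : ℕ, ∀ z ∈ ball (0 : Fin n → ℂ) ((k : ℝ) - 1),
      DifferentiableAt ℂ (fun w => Φlim (Ψ k w)) z := by
    intro k
    set F : ℕ → (Fin n → ℂ) → (Fin n → ℂ) := fun m z => Φ m (Ψ k z) with hF_def
    set F' : ℕ → (Fin n → ℂ) → ((Fin n → ℂ) →L[ℂ] (Fin n → ℂ)) :=
      fun m z => fderiv ℂ (F m) z with hF'_def
    have hFdiff : ∀ m, Differentiable ℂ (F m) := fun m => (hΦhol m).comp (hΨhol k)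
    have hdiffbound : ∀ m, k ≤ m → ∀ z ∈ ball (0 : Fin n → ℂ) ((k : ℝ) - 1),
        ‖F' (m + 1) z - F' m z‖ ≤ 2 * b m := by
      intro m hm z hz
      have hsub : DifferentiableOn ℂ (fun w => F (m + 1) w - F m w) (ball 0 (k : ℝ)) :=
        ((hFdiff (m + 1)).sub (hFdiff m)).differentiableOn
      have hbd : ∀ w ∈ ball (0 : Fin n → ℂ) (k : ℝ), ‖F (m + 1) w - F m w‖ ≤ ε m :=
        fun w hw => (key m (Ψ k w) (mono hm (hΨmem k w hw))).le
      have h1 := stmt16_aux_fderiv_bound hsub hbd hz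
      have heq : fderiv ℂ (fun w => F (m + 1) w - F m w) z = F' (m + 1) z - F' m z := by
        simp only [hF'_def]
        exact fderiv_sub ((hFdiff (m + 1)) z) ((hFdiff m) z)
      rw [heq] at h1
      calc ‖F' (m + 1) z - F' m z‖ ≤ 2 * ε m := h1
        _ ≤ 2 * b m := by linarith [hεb m]
    have teleF : ∀ z ∈ ball (0 : Fin n → ℂ) ((k : ℝ) - 1), ∀ p q : ℕ, k ≤ p → p ≤ q →
        ‖F' q z - F' p z‖ ≤ 4 * b p - 4 * b q := by
      intro z hz p q hkp hpq
      induction q, hpq using Nat.le_induction with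
      | base => simp
      | succ q hpq ih =>
        have h1 := hdiffbound q (hkp.trans hpq) z hz
        have h3 : b (q + 1) = b q / 2 := by simp only [hb_def, pow_succ]; ring
        have h4 := dist_triangle (F' (q + 1) z) (F' q z) (F' p z)
        rw [dist_eq_norm, dist_eq_norm, dist_eq_norm] at h4
        linarith
    have hcauchyF : ∀ z ∈ ball (0 : Fin n → ℂ) ((k : ℝ) - 1),
        ∃ A, Tendsto (fun m => F' m z) atTop (𝓝 A) := by
      intro z hz
      have hc : CauchySeq (fun m => F' (m + k) z) := by
        apply cauchySeq_of_le_geometric (1 / 2 : ℝ) (2 * b k) (by norm_num)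
        intro m
        have hidx : m + 1 + k = m + k + 1 := by omega
        have h1 := hdiffbound (m + k) (Nat.le_add_left k m) z hz
        have h3 : b (m + k) = b k * (1 / 2) ^ m := by simp only [hb_def, pow_add]; ring
        rw [dist_eq_norm, norm_sub_rev, hidx]
        calc ‖F' (m + k + 1) z - F' (m + k) z‖ ≤ 2 * b (m + k) := h1
          _ = 2 * b k * (1 / 2) ^ m := by rw [h3]; ring
      obtain ⟨A, hA⟩ := cauchySeq_tendsto_of_complete hc
      exact ⟨A, (tendsto_add_atTop_iff_nat k).1 hA⟩
    set g' : (Fin n → ℂ) → ((Fin n → ℂ) →L[ℂ] (Fin n → ℂ)) :=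
      fun z => limUnder atTop (fun m => F' m z) with hg'_def
    have hconvF : ∀ z ∈ ball (0 : Fin n → ℂ) ((k : ℝ) - 1),
        Tendsto (fun m => F' m z) atTop (𝓝 (g' z)) := by
      intro z hz
      obtain ⟨A, hA⟩ := hcauchyF z hz
      have h1 : g' z = A := by simp only [hg'_def]; exact hA.limUnder_eq
      rw [h1]; exact hA
    have hlimF : ∀ z ∈ ball (0 : Fin n → ℂ) ((k : ℝ) - 1), ∀ p, k ≤ p →
        ‖g' z - F' p z‖ ≤ 4 * b p := by
      intro z hz p hp
      have h1 : Tendsto (fun q => ‖F' q z - F' p z‖) atTop (𝓝 ‖g' z - F' p z‖) :=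
        ((hconvF z hz).sub tendsto_const_nhds).norm
      refine le_of_tendsto h1 ?_
      filter_upwards [eventually_ge_atTop p] with q hq
      exact (teleF z hz p q hp hq).trans (by linarith [hbpos q])
    have hunifF : TendstoUniformlyOn F' g' atTop (ball (0 : Fin n → ℂ) ((k : ℝ) - 1)) := by
      rw [Metric.tendstoUniformlyOn_iff]
      intro δ hδ
      have hb0 : Tendsto (fun m => 4 * b m) atTop (𝓝 (4 * 0)) := hbtend.const_mul 4
      rw [mul_zero] at hb0
      filter_upwards [hb0.eventually_lt_const hδ, eventually_ge_atTop k] with m h1 h2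
      intro z hz
      rw [dist_eq_norm]
      exact lt_of_le_of_lt (hlimF z hz m h2) h1
    intro z hz
    have hd := hasFDerivAt_of_tendstoUniformlyOn (g := fun w => Φlim (Ψ k w))
      isOpen_ball hunifF (fun m w _ => ((hFdiff m) w).hasFDerivAt)
      (fun w hw => hconv k (Ψ k w) (hΨmem k w (ball_subset_ball (by linarith) hw))) hz
    exact hd.differentiableAt
  -- differentiability of Φlim on Ω
  have hdiffΩ : ∀ x, x ∈ (⋃ j, S j) → DifferentiableAt ℂ Φlim x := by
    intro x hx
    obtain ⟨j0, hj0⟩ := mem_iUnion.1 hx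
    have hxj : x ∈ S (j0 + 1) := step j0 hj0
    have hmem : Φ (j0 + 3) x ∈ ball (0 : Fin n → ℂ) (((j0 + 3 : ℕ) : ℝ) - 1) := by
      have h1 := grow (j0 + 1) (by omega) x hxj (j0 + 3) (by omega)
      simp only [mem_ball, dist_zero_right]
      push_cast at h1 ⊢
      linarith
    have hGd : DifferentiableAt ℂ (fun w => Φlim (Ψ (j0 + 3) w)) (Φ (j0 + 3) x) :=
      hG (j0 + 3) _ hmem
    have hcomp : DifferentiableAt ℂ
        ((fun w => Φlim (Ψ (j0 + 3) w)) ∘ (Φ (j0 + 3))) x :=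
      DifferentiableAt.comp x hGd ((hΦhol (j0 + 3)) x)
    have hcomp' : DifferentiableAt ℂ (fun y => Φlim (Ψ (j0 + 3) (Φ (j0 + 3) y))) x := hcomp
    have heq : (fun y => Φlim (Ψ (j0 + 3) (Φ (j0 + 3) y))) = Φlim := by
      funext y; rw [hinv₁ (j0 + 3) y]
    rwa [heq] at hcomp'
  -- injectivity
  have hinj : Set.InjOn Φlim (⋃ j, S j) := by
    intro x hx y hy hxy
    obtain ⟨jx, hjx⟩ := mem_iUnion.1 hx
    obtain ⟨jy, hjy⟩ := mem_iUnion.1 hy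
    obtain ⟨j, hj1, hxj, hyj⟩ : ∃ j : ℕ, 1 ≤ j ∧ x ∈ S j ∧ y ∈ S j :=
      ⟨max jx jy + 1, by omega, mono (by omega) hjx, mono (by omega) hjy⟩
    set k := j + 7 with hk_def
    have hGdiff : DifferentiableOn ℂ (fun w => Φlim (Ψ k w) - w)
        (ball (0 : Fin n → ℂ) ((k : ℝ) - 1)) := by
      intro z hz
      exact ((hG k z hz).sub differentiableAt_fun_id).differentiableWithinAt
    have hGbound : ∀ z ∈ ball (0 : Fin n → ℂ) ((k : ℝ) - 1),
        ‖Φlim (Ψ k z) - z‖ ≤ 2 * b k := by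
      intro z hz
      have hz' : z ∈ ball (0 : Fin n → ℂ) (k : ℝ) := ball_subset_ball (by linarith) hz
      have h2 := hlimdist k (Ψ k z) (hΨmem k z hz') k le_rfl
      rwa [hinv₂ k z] at h2
    have hxmem : Φ k x ∈ ball (0 : Fin n → ℂ) ((k : ℝ) - 1 - 1) := by
      have h1 := grow j hj1 x hxj k (by omega)
      simp only [mem_ball, dist_zero_right, hk_def]
      push_cast
      push_cast at h1
      linarith
    have hymem : Φ k y ∈ ball (0 : Fin n → ℂ) ((k : ℝ) - 1 - 1) := by
      have h1 := grow j hj1 y hyj k (by omega)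
      simp only [mem_ball, dist_zero_right, hk_def]
      push_cast
      push_cast at h1
      linarith
    have hlip := stmt16_aux_lipschitz hGdiff hGbound hxmem hymem
    have hGx : Φlim (Ψ k (Φ k x)) - Φ k x = Φlim x - Φ k x := by rw [hinv₁ k x]
    have hGy : Φlim (Ψ k (Φ k y)) - Φ k y = Φlim y - Φ k y := by rw [hinv₁ k y]
    have h5 : ‖(Φlim (Ψ k (Φ k y)) - Φ k y) - (Φlim (Ψ k (Φ k x)) - Φ k x)‖
        = ‖Φ k y - Φ k x‖ := by
      rw [hGx, hGy, hxy]
      have : Φlim y - Φ k y - (Φlim y - Φ k x) = Φ k x - Φ k y := by abel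
      rw [this, norm_sub_rev]
    rw [h5] at hlip
    have h6 : b k ≤ (1 / 2 : ℝ) ^ 7 := by
      simp only [hb_def]
      exact pow_le_pow_of_le_one (by norm_num) (by norm_num) (by omega)
    have h7 : ‖Φ k y - Φ k x‖ ≤ 0 := by
      nlinarith [norm_nonneg (Φ k y - Φ k x)]
    have h8 : Φ k y = Φ k x := by
      have h9 : ‖Φ k y - Φ k x‖ = 0 := le_antisymm h7 (norm_nonneg _)
      exact sub_eq_zero.1 (norm_eq_zero.1 h9)
    have h10 := congrArg (Ψ k) h8
    rw [hinv₁ k y, hinv₁ k x] at h10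
    exact h10.symm
  refine ⟨isOpen_iUnion hopen, Φlim, ?_, ?_, hinj⟩
  · intro u hu x hx
    obtain ⟨j, hj⟩ := mem_iUnion.1 (show x ∈ ⋃ j, S j from hx)
    exact ⟨S j, mem_nhdsWithin_of_mem_nhds ((hopen j).mem_nhds hj), hunif j u hu⟩
  · exact fun x hx => (hdiffΩ x hx).differentiableWithinAt
end

section
/- Let G = {ρ < 0} be a smoothly bounded simply connected domain in ℂ with a ∈ ∂G, and let D be a smoothly bounded domain with a ∈ ∂D such that −ρ(z) ≥ c·dist(z,a)² for all z ∈ ∂D near a (G osculates D from outside to second order at a). If β(z) = z + M z^N + O(z^{N+1}) (in a local coordinate with a = 0) is holomorphic near a with N > 2 and |M| and the remainder sufficiently small, then β maps D̄ ∩ U₁ into G ∪ {a} for a sufficiently small neighborhood U₁ of a. -/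
open Set Metric

open Set.Notation in
lemma seg_frontier_aux {D : Set ℂ} {z w : ℂ} (hz : z ∈ closure D)
    (hw : w ∉ closure D) : ∃ p ∈ segment ℝ z w, p ∈ frontier D := by
  by_contra h
  push_neg at h
  have hdisj : Disjoint (frontier (interior (closure D))) (segment ℝ z w) := by
    rw [disjoint_left]
    intro p hp hpseg
    exact h p hpseg (frontier_closure_subset (frontier_interior_subset hp))
  have hclopen := isClopen_preimage_val isOpen_interior hdisj
  have hpre : PreconnectedSpace (segment ℝ z w) :=
    Subtype.preconnectedSpace (convex_segment z w).isPreconnected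
  rcases isClopen_iff.mp hclopen with he | hu
  · have hzint : z ∉ interior (closure D) := by
      intro hzint
      have : (⟨z, left_mem_segment ℝ z w⟩ : segment ℝ z w)
          ∈ (segment ℝ z w) ↓∩ interior (closure D) := hzint
      rw [he] at this
      exact this
    have hzf : z ∈ frontier D := by
      apply frontier_closure_subset
      rw [frontier, closure_closure]
      exact ⟨hz, hzint⟩
    exact h z (left_mem_segment ℝ z w) hzf
  · have : (⟨w, right_mem_segment ℝ z w⟩ : segment ℝ z w)
        ∈ (segment ℝ z w) ↓∩ interior (closure D) := by rw [hu]; trivial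
    exact hw (interior_subset this)

set_option maxHeartbeats 1600000 in
/-- Let `G = {ρ < 0}` be a smoothly bounded simply connected domain in
`ℂ` with `0 ∈ ∂G`, and `D` a smoothly bounded domain with `0 ∈ ∂D`, such that near `0`
one has `D̄ ⊆ G ∪ {0}` and `−ρ(z) ≥ c|z|²` for `z ∈ ∂D` (i.e. `G` osculates `D` from
outside to second order at `0`).  If `β(z) = z + M z^N + O(z^{N+1})` is holomorphic near
`0` with `N > 2` and `|M|` and the remainder constant sufficiently small, then `β` maps
`D̄ ∩ U₁` into `G ∪ {0}` for a sufficiently small neighborhood `U₁` of `0`. -/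
theorem stmt17 (G D : Set ℂ) (ρ : ℂ → ℝ) (hG : G = {z | ρ z < 0})
    (hρ : ContDiff ℝ 1 ρ) (hGopen : IsOpen G) (hDopen : IsOpen D)
    (h0G : (0:ℂ) ∈ frontier G) (h0D : (0:ℂ) ∈ frontier D)
    (c : ℝ) (hc : 0 < c)
    (hosc : ∃ r₀ > (0:ℝ), ∀ z ∈ frontier D, ‖z‖ < r₀ → c * ‖z‖ ^ 2 ≤ -ρ z)
    (hDG : ∃ r₁ > (0:ℝ), ∀ z ∈ closure D, ‖z‖ < r₁ → z ∈ G ∪ {0})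
    (N : ℕ) (hN : 2 < N) :
    ∃ δ > (0:ℝ), ∀ (β : ℂ → ℂ) (M : ℂ) (K rβ : ℝ), 0 < rβ →
      DifferentiableOn ℂ β (Metric.ball 0 rβ) →
      (∀ z ∈ Metric.ball (0:ℂ) rβ, ‖β z - z - M * z ^ N‖ ≤ K * ‖z‖ ^ (N + 1)) →
      ‖M‖ < δ → K < δ →
      ∃ U₁ : Set ℂ, IsOpen U₁ ∧ (0:ℂ) ∈ U₁ ∧
        β '' (closure D ∩ U₁) ⊆ G ∪ {0} := by
  obtain ⟨r₀, hr₀, hosc⟩ := hosc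
  obtain ⟨r₁, hr₁, hDG⟩ := hDG
  -- Lipschitz bound for ρ on the closed unit ball
  obtain ⟨B, hB⟩ : ∃ B : ℝ, ∀ x ∈ closedBall (0:ℂ) 1, ‖fderiv ℝ ρ x‖ ≤ B := by
    obtain ⟨B, hB⟩ := (isCompact_closedBall (0:ℂ) 1).exists_bound_of_continuousOn
      ((hρ.continuous_fderiv one_ne_zero).continuousOn)
    exact ⟨B, hB⟩
  obtain ⟨L, hL, hlip⟩ : ∃ L : ℝ, 0 < L ∧ ∀ x ∈ closedBall (0:ℂ) 1, ∀ y ∈ closedBall (0:ℂ) 1,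
      ‖ρ y - ρ x‖ ≤ L * ‖y - x‖ := by
    refine ⟨|B| + 1, by positivity, ?_⟩
    intro x hx y hy
    refine (convex_closedBall (0:ℂ) 1).norm_image_sub_le_of_norm_fderiv_le
      (fun u _ => hρ.differentiable one_ne_zero u) (fun u hu => ?_) hx hy
    exact (hB u hu).trans (by nlinarith [abs_nonneg B, le_abs_self B])
  obtain ⟨R, hR, hR1, hRr₀, hRr₁⟩ :
      ∃ R : ℝ, 0 < R ∧ R ≤ 1 / 2 ∧ 2 * R ≤ r₀ ∧ 2 * R ≤ r₁ := by
    refine ⟨min (min r₀ r₁) 1 / 2, ?_, ?_, ?_, ?_⟩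
    · have := lt_min (lt_min hr₀ hr₁) one_pos
      positivity
    · have : min (min r₀ r₁) 1 ≤ 1 := min_le_right _ _
      linarith
    · have h1 : min (min r₀ r₁) 1 ≤ r₀ := le_trans (min_le_left _ _) (min_le_left _ _)
      linarith
    · have h1 : min (min r₀ r₁) 1 ≤ r₁ := le_trans (min_le_left _ _) (min_le_right _ _)
      linarith
  obtain ⟨c', hc', hc'L, hc'R⟩ :
      ∃ c' : ℝ, 0 < c' ∧ c' ≤ c / (4 * L) ∧ c' ≤ 1 / (2 * R) :=
    ⟨min (c / (4 * L)) (1 / (2 * R)), lt_min (by positivity) (by positivity),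
      min_le_left _ _, min_le_right _ _⟩
  -- Key: distance from points of D̄ near 0 to the complement of G
  have key : ∀ z ∈ closure D, z ≠ 0 → ‖z‖ < R → ∀ w, w ∉ G → c' * ‖z‖ ^ 2 ≤ ‖z - w‖ := by
    intro z hzD hz0 hzR w hwG
    have hz : 0 < ‖z‖ := norm_pos_iff.mpr hz0
    rcases le_or_gt (‖z‖ / 2) (‖z - w‖) with hcase | hcase
    · have h1 : c' ≤ 1 / (2 * R) := hc'R
      have h2 : c' * ‖z‖ ^ 2 ≤ ‖z‖ / 2 := by
        have : c' * ‖z‖ ^ 2 ≤ (1 / (2 * R)) * ‖z‖ ^ 2 := by nlinarith [sq_nonneg ‖z‖]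
        have h3 : (1 / (2 * R)) * ‖z‖ ^ 2 ≤ ‖z‖ / 2 := by
          rw [div_mul_eq_mul_div, div_le_div_iff₀ (by positivity) two_pos]
          nlinarith
        linarith
      linarith
    · -- ‖z - w‖ < ‖z‖/2
      have hwnorm : ‖w‖ ≤ 3 / 2 * ‖z‖ := by
        have := norm_sub_norm_le z w
        have h2 := norm_sub_rev z w
        nlinarith [norm_nonneg w, norm_sub_norm_le w z]
      have hwr₁ : ‖w‖ < r₁ := by nlinarith
      have hwD : w ∉ closure D := by
        intro hwD
        rcases hDG w hwD hwr₁ with hwG' | hw0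
        · exact hwG hwG'
        · simp only [mem_singleton_iff] at hw0
          subst hw0
          simp only [sub_zero] at hcase
          linarith
      obtain ⟨p, hpseg, hpfr⟩ := seg_frontier_aux hzD hwD
      have hdist := dist_add_dist_of_mem_segment hpseg
      rw [dist_eq_norm, dist_eq_norm, dist_eq_norm] at hdist
      have hzp : ‖z - p‖ ≤ ‖z - w‖ := by nlinarith [norm_nonneg (p - w)]
      have hpl : ‖z‖ / 2 ≤ ‖p‖ := by
        have := norm_sub_norm_le z p
        linarith
      have hpu : ‖p‖ ≤ 3 / 2 * ‖z‖ := by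
        have := norm_sub_norm_le p z
        have h2 := norm_sub_rev z p
        nlinarith [norm_sub_norm_le p z]
      have hpr₀ : ‖p‖ < r₀ := by nlinarith
      have hρp := hosc p hpfr hpr₀
      have hρw : 0 ≤ ρ w := by
        by_contra h
        exact hwG (by rw [hG]; exact lt_of_not_ge h)
      have hpball : p ∈ closedBall (0:ℂ) 1 := by
        simp only [mem_closedBall, dist_zero_right]
        linarith
      have hwball : w ∈ closedBall (0:ℂ) 1 := by
        simp only [mem_closedBall, dist_zero_right]
        linarith
      have hlpw := hlip p hpball w hwball
      have habs : ρ w - ρ p ≤ L * ‖w - p‖ := by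
        rw [Real.norm_eq_abs] at hlpw
        exact le_trans (le_abs_self _) hlpw
      have hcz : c * (‖z‖ / 2) ^ 2 ≤ c * ‖p‖ ^ 2 :=
        mul_le_mul_of_nonneg_left (pow_le_pow_left₀ (by positivity) hpl 2) hc.le
      have hpw : c * ‖z‖ ^ 2 / 4 ≤ L * ‖w - p‖ := by
        have hring : (‖z‖ / 2) ^ 2 = ‖z‖ ^ 2 / 4 := by ring
        rw [hring] at hcz
        have h1 : c * ‖z‖ ^ 2 / 4 = c * (‖z‖ ^ 2 / 4) := by ring
        rw [h1]
        nlinarith [hcz, hρp, habs, hρw]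
      have hwp : ‖w - p‖ = ‖p - w‖ := norm_sub_rev w p
      have h4 : c' * ‖z‖ ^ 2 ≤ ‖p - w‖ := by
        have h5 : c' ≤ c / (4 * L) := hc'L
        rw [hwp] at hpw
        have h7 : c / (4 * L) * ‖z‖ ^ 2 ≤ ‖p - w‖ := by
          rw [div_mul_eq_mul_div, div_le_iff₀ (by positivity : (0:ℝ) < 4 * L)]
          nlinarith
        nlinarith [sq_nonneg ‖z‖]
      nlinarith [norm_nonneg (z - p)]
  refine ⟨1, one_pos, ?_⟩
  intro β M K rβ hrβ hβdiff hβ hM hK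
  obtain ⟨r, hr, hrR, hrrβ, hrc'⟩ :
      ∃ r : ℝ, 0 < r ∧ r ≤ R ∧ r ≤ rβ ∧ r ≤ c' / 4 :=
    ⟨min (min R rβ) (c' / 4), lt_min (lt_min hR hrβ) (by positivity),
      le_trans (min_le_left _ _) (min_le_left _ _),
      le_trans (min_le_left _ _) (min_le_right _ _), min_le_right _ _⟩
  refine ⟨ball 0 r, isOpen_ball, mem_ball_self hr, ?_⟩
  rintro _ ⟨z, ⟨hzD, hzU⟩, rfl⟩
  rw [mem_ball, dist_zero_right] at hzU
  rcases eq_or_ne z 0 with rfl | hz0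
  · have h0 := hβ 0 (mem_ball_self hrβ)
    have hN0 : N ≠ 0 := by omega
    rw [zero_pow hN0, mul_zero, sub_zero, sub_zero, norm_zero,
      zero_pow (Nat.succ_ne_zero N), mul_zero] at h0
    right
    simp only [mem_singleton_iff]
    exact norm_le_zero_iff.mp h0
  · left
    by_contra hw
    have hkey := key z hzD hz0 (lt_of_lt_of_le hzU hrR) (β z) hw
    have hzb : z ∈ ball (0:ℂ) rβ := by
      rw [mem_ball, dist_zero_right]; exact lt_of_lt_of_le hzU hrrβ
    have hβz := hβ z hzb
    have hz : 0 < ‖z‖ := norm_pos_iff.mpr hz0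
    have hz1 : ‖z‖ ≤ 1 := by
      have : ‖z‖ < R := lt_of_lt_of_le hzU hrR
      linarith [hR1]
    have hdisp : ‖β z - z‖ ≤ ‖β z - z - M * z ^ N‖ + ‖M * z ^ N‖ := by
      have := norm_add_le (β z - z - M * z ^ N) (M * z ^ N)
      simpa using this
    have hMz : ‖M * z ^ N‖ ≤ ‖M‖ * ‖z‖ ^ N := by
      rw [norm_mul, norm_pow]
    have hpow1 : ‖z‖ ^ (N + 1) ≤ ‖z‖ ^ N := pow_le_pow_of_le_one (norm_nonneg z) hz1 (by omega)
    have hpow2 : ‖z‖ ^ N ≤ ‖z‖ ^ 3 := pow_le_pow_of_le_one (norm_nonneg z) hz1 (by omega)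
    have hKp : K * ‖z‖ ^ (N + 1) ≤ ‖z‖ ^ N := by
      rcases le_or_gt K 0 with h | h
      · have h1 : K * ‖z‖ ^ (N + 1) ≤ 0 :=
          mul_nonpos_of_nonpos_of_nonneg h (pow_nonneg (norm_nonneg z) _)
        linarith [pow_pos hz N]
      · have h1 : K * ‖z‖ ^ (N + 1) ≤ 1 * ‖z‖ ^ (N + 1) :=
          mul_le_mul_of_nonneg_right hK.le (pow_nonneg (norm_nonneg z) _)
        rw [one_mul] at h1
        linarith
    have hMp : ‖M‖ * ‖z‖ ^ N ≤ ‖z‖ ^ N := by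
      have h1 : ‖M‖ * ‖z‖ ^ N ≤ 1 * ‖z‖ ^ N :=
        mul_le_mul_of_nonneg_right hM.le (pow_nonneg (norm_nonneg z) _)
      rw [one_mul] at h1
      exact h1
    have hd2 : ‖β z - z‖ ≤ 2 * ‖z‖ ^ 3 := by
      calc ‖β z - z‖ ≤ K * ‖z‖ ^ (N + 1) + ‖M‖ * ‖z‖ ^ N := by linarith
        _ ≤ 2 * ‖z‖ ^ N := by linarith
        _ ≤ 2 * ‖z‖ ^ 3 := by linarith
    have hd3 : 2 * ‖z‖ ^ 3 < c' * ‖z‖ ^ 2 := by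
      have : ‖z‖ ^ 3 = ‖z‖ * ‖z‖ ^ 2 := by ring
      have h1 : ‖z‖ < c' / 4 := lt_of_lt_of_le hzU hrc'
      nlinarith [sq_nonneg ‖z‖, pow_pos hz 2]
    have := norm_sub_rev z (β z)
    linarith [hkey]
end
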